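/- arXiv:1004.2008 — 2 statements merged into one kernel-verified Lean document; each statement's English description precedes it below -/
import Mathlib

section
/- If rank(X₁) < rank(X), then the Nyström approximation is not exact: Xᵀ X₁ (X₁ᵀX₁)⁺ X₁ᵀ X ≠ XᵀX. -/
open Matrix

/-- `B` is the Moore–Penrose pseudoinverse of `A`. -/
def IsMoorePenrose {l : ℕ} (A B : Matrix (Fin l) (Fin l) ℝ) : Prop :=
  A * B * A = A ∧ B * A * B = B ∧ (A * B)ᵀ = A * B ∧ (B * A)ᵀ = B * A

theorem nystrom_not_exact (m n l : ℕ)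
    (X : Matrix (Fin m) (Fin n) ℝ)
    (f : Fin l → Fin n) (X₁ : Matrix (Fin m) (Fin l) ℝ)
    (hX₁ : X₁ = X.submatrix id f)
    (hrank : X₁.rank < X.rank)
    (Wp : Matrix (Fin l) (Fin l) ℝ) (hWp : IsMoorePenrose (X₁ᵀ * X₁) Wp) :
    Xᵀ * X₁ * Wp * X₁ᵀ * X ≠ Xᵀ * X := by
  intro h
  have h1 : (Xᵀ * X₁ * Wp * X₁ᵀ * X).rank ≤ X₁.rank :=
    le_trans (rank_mul_le_left _ _) <|
      le_trans (rank_mul_le_left _ _) <|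
        le_trans (rank_mul_le_left _ _) (rank_mul_le_right _ _)
  rw [h, rank_transpose_mul_self] at h1
  omega
end

section
/- Let G be a rank-r SPSD matrix and let l columns be chosen such that the corresponding principal submatrix W also has rank r. Then the rank-k Nyström approximation with any k ≥ r is exact: G = C W_k⁺ Cᵀ, where W_k is the best rank-k approximation of W. -/
open Matrix

/-- Squared Frobenius norm. -/
def frobSq {l : ℕ} (A : Matrix (Fin l) (Fin l) ℝ) : ℝ :=
  ∑ i, ∑ j, (A i j) ^ 2

lemma frobSq_eq_zero {l : ℕ} {A : Matrix (Fin l) (Fin l) ℝ} (h : frobSq A = 0) : A = 0 := by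
  ext i j
  have h1 := (Finset.sum_eq_zero_iff_of_nonneg (fun i _ =>
    Finset.sum_nonneg fun j _ => sq_nonneg (A i j))).mp h i (Finset.mem_univ i)
  have h2 := (Finset.sum_eq_zero_iff_of_nonneg (fun j _ => sq_nonneg (A i j))).mp h1 j
    (Finset.mem_univ j)
  simpa using pow_eq_zero_iff two_ne_zero |>.mp h2

lemma expand_gen {n l : Type*} [Fintype n] [Fintype l] (A : Matrix n l ℝ)
    (P : Matrix l l ℝ) :
    (A * P - A)ᵀ * (A * P - A)
      = Pᵀ * ((Aᵀ * A) * P) - Pᵀ * (Aᵀ * A) - (Aᵀ * A) * P + Aᵀ * A := by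
  simp only [Matrix.transpose_sub, Matrix.transpose_mul, Matrix.sub_mul, Matrix.mul_sub,
    Matrix.mul_assoc]
  abel

lemma transpose_mul_self_eq_zero' {n l : Type*} [Fintype n] [Fintype l]
    {N : Matrix n l ℝ} (h : Nᵀ * N = 0) : N = 0 := by
  have hH : Nᴴ = Nᵀ := by ext i j; simp [Matrix.conjTranspose_apply]
  exact Matrix.conjTranspose_mul_self_eq_zero.mp (by rw [hH, h])

lemma mp_fix {n l : Type*} [Fintype n] [Fintype l] (A : Matrix n l ℝ) (P : Matrix l l ℝ)
    (hWP : (Aᵀ * A) * P = Aᵀ * A) (hPt : Pᵀ = P) :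
    A * P = A := by
  have key : (A * P - A)ᵀ * (A * P - A) = 0 := by
    rw [expand_gen, hWP, hPt]
    abel
  exact sub_eq_zero.mp (transpose_mul_self_eq_zero' key)

theorem nystrom_rank_k_exact (l m r k : ℕ) (hrk : r ≤ k) (hkl : k ≤ l)
    (W : Matrix (Fin l) (Fin l) ℝ) (B : Matrix (Fin l) (Fin m) ℝ)
    (D : Matrix (Fin m) (Fin m) ℝ)
    (G : Matrix (Fin l ⊕ Fin m) (Fin l ⊕ Fin m) ℝ)
    (hG : G = Matrix.fromBlocks W B Bᵀ D)
    (hpsd : G.PosSemidef) (hrG : G.rank = r) (hrW : W.rank = r)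
    (C : Matrix (Fin l ⊕ Fin m) (Fin l) ℝ) (hC : C = Matrix.fromRows W Bᵀ)
    -- `Wk` is a best rank-`k` approximation of `W` in Frobenius norm
    (Wk : Matrix (Fin l) (Fin l) ℝ) (hWk_rank : Wk.rank ≤ k)
    (hWk_best : ∀ M : Matrix (Fin l) (Fin l) ℝ, M.rank ≤ k →
      frobSq (W - Wk) ≤ frobSq (W - M))
    (Wkp : Matrix (Fin l) (Fin l) ℝ) (hWkp : IsMoorePenrose Wk Wkp) :
    G = C * Wkp * Cᵀ := by
  -- Step 1: Wk = W
  have hWkW : Wk = W := by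
    have h0 : frobSq (W - Wk) ≤ frobSq (W - W) := hWk_best W (by rw [hrW]; exact hrk)
    rw [sub_self] at h0
    have hz : frobSq (0 : Matrix (Fin l) (Fin l) ℝ) = 0 := by simp [frobSq]
    rw [hz] at h0
    have hnn : 0 ≤ frobSq (W - Wk) :=
      Finset.sum_nonneg fun _ _ => Finset.sum_nonneg fun _ _ => sq_nonneg _
    have := frobSq_eq_zero (le_antisymm h0 hnn)
    exact (sub_eq_zero.mp this).symm
  -- Step 2: decompose G = Aᵀ * A
  obtain ⟨A, hA⟩ : ∃ A : Matrix (Fin l ⊕ Fin m) (Fin l ⊕ Fin m) ℝ, G = Aᴴ * A := by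
    open scoped MatrixOrder in
    obtain ⟨B, hB⟩ := CStarAlgebra.nonneg_iff_eq_star_mul_self.mp hpsd.nonneg
    exact ⟨B, hB⟩
  have hA' : G = Aᵀ * A := by
    have hAH : Aᴴ = Aᵀ := by ext i j; simp [Matrix.conjTranspose_apply]
    rw [hA, hAH]
  set A₁ : Matrix (Fin l ⊕ Fin m) (Fin l) ℝ := A.submatrix id Sum.inl with hA₁
  -- W = A₁ᵀ * A₁
  have hW : W = A₁ᵀ * A₁ := by
    ext i j
    have h := congrFun (congrFun hA' (Sum.inl i)) (Sum.inl j)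
    rw [hG] at h
    simpa [Matrix.mul_apply, Matrix.fromBlocks, hA₁, Matrix.submatrix_apply] using h
  -- C = Aᵀ * A₁
  have hCeq : C = Aᵀ * A₁ := by
    ext i j
    have h := congrFun (congrFun hA' i) (Sum.inl j)
    rw [hG] at h
    cases i with
    | inl i => simpa [hC, Matrix.mul_apply, Matrix.fromBlocks, hA₁, Matrix.submatrix_apply] using h
    | inr i => simpa [hC, Matrix.mul_apply, Matrix.fromBlocks, hA₁, Matrix.submatrix_apply] using h
  -- ranks
  have hrA : A.rank = r := by rw [← Matrix.rank_transpose_mul_self, ← hA', hrG]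
  have hrA₁ : A₁.rank = r := by rw [← Matrix.rank_transpose_mul_self, ← hW, hrW]
  -- range equality
  have hsub : LinearMap.range A₁.mulVecLin ≤ LinearMap.range A.mulVecLin := by
    rintro v ⟨x, rfl⟩
    refine ⟨Sum.elim x 0, ?_⟩
    ext i
    simp [Matrix.mulVecLin_apply, Matrix.mulVec, dotProduct, Fintype.sum_sum_type,
      hA₁, Matrix.submatrix_apply]
  have hrange : LinearMap.range A₁.mulVecLin = LinearMap.range A.mulVecLin := by
    apply Submodule.eq_of_le_of_finrank_le hsub
    have e1 : Module.finrank ℝ (LinearMap.range A.mulVecLin) = A.rank := rfl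
    have e2 : Module.finrank ℝ (LinearMap.range A₁.mulVecLin) = A₁.rank := rfl
    rw [e1, e2, hrA, hrA₁]
  -- columns of A lie in range of A₁ : A = A₁ * Z
  have hcol : ∀ j, ∃ z : Fin l → ℝ, A₁ *ᵥ z = fun i => A i j := by
    intro j
    have hmem : (fun i => A i j) ∈ LinearMap.range A.mulVecLin := by
      refine ⟨Pi.single j 1, ?_⟩
      ext i
      simp [Matrix.mulVecLin_apply, Matrix.mulVec, dotProduct, Pi.single_apply]
    rw [← hrange] at hmem
    exact hmem
  choose Z hZ using hcol
  set Zm : Matrix (Fin l) (Fin l ⊕ Fin m) ℝ := fun i j => Z j i with hZm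
  have hAZ : A₁ * Zm = A := by
    ext i j
    have h := congrFun (hZ j) i
    show ∑ x, A₁ i x * Zm x j = A i j
    simpa [Matrix.mul_apply, Matrix.mulVec, dotProduct, hZm] using h
  -- Moore-Penrose facts for W
  obtain ⟨mp1, _, _, mp4⟩ := hWkp
  rw [hWkW] at mp1 mp4
  have hP : (A₁ᵀ * A₁) * (Wkp * (A₁ᵀ * A₁)) = A₁ᵀ * A₁ := by
    rw [← hW, ← Matrix.mul_assoc]; exact mp1
  have hPt : (Wkp * (A₁ᵀ * A₁))ᵀ = Wkp * (A₁ᵀ * A₁) := by rw [← hW]; exact mp4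
  have hfix : A₁ * (Wkp * (A₁ᵀ * A₁)) = A₁ := mp_fix A₁ _ hP hPt
  -- final assembly
  have key2 : A₁ * (Wkp * (A₁ᵀ * A)) = A := by
    conv_lhs => rw [← hAZ]
    calc A₁ * (Wkp * (A₁ᵀ * (A₁ * Zm)))
        = (A₁ * (Wkp * (A₁ᵀ * A₁))) * Zm := by simp only [Matrix.mul_assoc]
      _ = A₁ * Zm := by rw [hfix]
      _ = A := hAZ
  rw [hCeq, hA']
  have hCt : (Aᵀ * A₁)ᵀ = A₁ᵀ * A := by rw [Matrix.transpose_mul, Matrix.transpose_transpose]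
  rw [hCt]
  calc Aᵀ * A = Aᵀ * (A₁ * (Wkp * (A₁ᵀ * A))) := by rw [key2]
    _ = Aᵀ * A₁ * Wkp * (A₁ᵀ * A) := by simp only [Matrix.mul_assoc]
end
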